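/- arXiv:1004.4781 — 2 statements merged into one kernel-verified Lean document; each statement's English description precedes it below -/
import Mathlib

section
/- (Kronecker's theorem) Let α be an algebraic integer all of whose Galois conjugates (including α itself) have complex absolute value equal to 1. Then α is a root of unity. -/
/-- Kronecker's theorem: an algebraic integer all of whose Galois conjugates
(roots of its minimal polynomial over ℚ, including itself) have absolute value `1`
is a root of unity. -/
theorem stmt4 (α : ℂ) (hint : IsIntegral ℤ α)
    (hconj : ∀ β : ℂ, Polynomial.aeval β (minpoly ℤ α) = 0 → ‖β‖ = 1) :
    ∃ m : ℕ, 1 ≤ m ∧ α ^ m = 1 := by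
  have halg : IsAlgebraic ℚ α := (hint.tower_top (R := ℤ) (A := ℚ)).isAlgebraic
  set K := IntermediateField.adjoin ℚ {α} with hK
  have hmem : α ∈ K := IntermediateField.mem_adjoin_simple_self ℚ α
  set x : K := ⟨α, hmem⟩ with hx
  haveI : FiniteDimensional ℚ K :=
    IntermediateField.adjoin.finiteDimensional halg.isIntegral
  haveI : NumberField K := ⟨⟩
  have hxi : IsIntegral ℤ x := by
    rwa [← isIntegral_algebraMap_iff (algebraMap K ℂ).injective]
  have hminx : minpoly ℤ x = minpoly ℤ α :=
    (minpoly.algebraMap_eq (algebraMap K ℂ).injective x).symm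
  have hnorm : ∀ φ : K →+* ℂ, ‖φ x‖ = 1 := by
    intro φ
    have : Polynomial.aeval (φ x) (minpoly ℤ α) = 0 := by
      rw [← hminx, show φ x = φ.toIntAlgHom x from rfl, Polynomial.aeval_algHom_apply (φ.toIntAlgHom) x, minpoly.aeval, map_zero]
    simpa using hconj _ this
  obtain ⟨n, hn, h⟩ := NumberField.Embeddings.pow_eq_one_of_norm_eq_one K ℂ hxi hnorm
  refine ⟨n, hn, ?_⟩
  have := congrArg (algebraMap K ℂ) h
  simpa using this
end

section
/- (Burnside) Let G be a subgroup of GLₙ(ℂ) such that every element g ∈ G satisfies g^s = 1 for a fixed integer s ≥ 1. Then G is finite. -/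
open Matrix Polynomial



theorem burnside_root_pow (n s : ℕ) (A : Matrix (Fin n) (Fin n) ℂ) (hA : A ^ s = 1)
    {μ : ℂ} (hμ : A.charpoly.IsRoot μ) : μ ^ s = 1 := by
  have hdet : (μ • (1 : Matrix (Fin n) (Fin n) ℂ) - A).det = 0 := by
    have he : (μ • (1 : Matrix (Fin n) (Fin n) ℂ) - A) = (charmatrix A).map (eval μ) := by
      ext i j
      by_cases h : i = j
      · subst h; simp [charmatrix_apply_eq, Matrix.one_apply]
      · simp [charmatrix_apply_ne _ _ _ h, Matrix.one_apply_ne h]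
    rw [he]
    calc ((charmatrix A).map (eval μ)).det
        = ((evalRingHom μ).mapMatrix (charmatrix A)).det := rfl
      _ = evalRingHom μ (charmatrix A).det := (RingHom.map_det _ _).symm
      _ = 0 := hμ
  obtain ⟨v, hv, hmul⟩ := (Matrix.exists_mulVec_eq_zero_iff).mpr hdet
  have hAv : A *ᵥ v = μ • v := by
    rw [Matrix.sub_mulVec, sub_eq_zero] at hmul
    rw [← hmul, Matrix.smul_mulVec, Matrix.one_mulVec]
  have hpow : ∀ k : ℕ, (A ^ k) *ᵥ v = μ ^ k • v := by
    intro k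
    induction k with
    | zero => simp
    | succ k ih =>
      rw [pow_succ, ← Matrix.mulVec_mulVec, hAv, Matrix.mulVec_smul, ih, pow_succ, smul_smul,
        mul_comm]
  have hvs := hpow s
  rw [hA, Matrix.one_mulVec] at hvs
  by_contra hne
  apply hv
  have hz : (μ ^ s - 1) • v = 0 := by rw [sub_smul, one_smul, ← hvs, sub_self]
  rcases smul_eq_zero.mp hz with h | h
  · exact absurd (by rwa [sub_eq_zero] at h) hne
  · exact h



-- the finite set of possible traces
theorem burnside_Tset_finite (n s : ℕ) (hs : 1 ≤ s) :
    {z : ℂ | ∃ f : Fin n → ℂ, (∀ i, f i ^ s = 1) ∧ ∑ i, f i = z}.Finite := by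
  have hR : {z : ℂ | z ^ s = 1}.Finite := by
    have : {z : ℂ | z ^ s = 1} ⊆ {z : ℂ | ((X : ℂ[X]) ^ s - 1).IsRoot z} := by
      intro z hz
      simp [IsRoot, sub_eq_zero, hz]
    refine Set.Finite.subset (Polynomial.finite_setOf_isRoot ?_) this
    have := Polynomial.X_pow_sub_C_ne_zero (R := ℂ) (by omega : 0 < s) 1
    rwa [Polynomial.C_1] at this
  have hpi : (Set.pi Set.univ (fun _ : Fin n => {z : ℂ | z ^ s = 1})).Finite :=
    Set.Finite.pi fun _ => hR
  have : {z : ℂ | ∃ f : Fin n → ℂ, (∀ i, f i ^ s = 1) ∧ ∑ i, f i = z} ⊆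
      (fun f : Fin n → ℂ => ∑ i, f i) '' (Set.pi Set.univ (fun _ => {z : ℂ | z ^ s = 1})) := by
    rintro z ⟨f, hf, rfl⟩
    exact ⟨f, fun i _ => hf i, rfl⟩
  exact Set.Finite.subset (hpi.image _) this

theorem burnside_trace_mem (n s : ℕ) (hs : 1 ≤ s) (A : Matrix (Fin n) (Fin n) ℂ)
    (hA : A ^ s = 1)
    (hroot : ∀ μ : ℂ, A.charpoly.IsRoot μ → μ ^ s = 1) :
    A.trace ∈ {z : ℂ | ∃ f : Fin n → ℂ, (∀ i, f i ^ s = 1) ∧ ∑ i, f i = z} := by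
  have htr : A.trace = A.charpoly.roots.sum := Matrix.trace_eq_sum_roots_charpoly A
  have hsplit : A.charpoly.Splits := IsAlgClosed.splits _
  have hcard : A.charpoly.roots.card = n := by
    rw [(Polynomial.splits_iff_card_roots).mp hsplit, Matrix.charpoly_natDegree_eq_dim,
      Fintype.card_fin]
  set l := A.charpoly.roots.toList with hl
  have hlen : l.length = n := by rw [hl, Multiset.length_toList, hcard]
  refine ⟨fun i => l.get (Fin.cast hlen.symm i), fun i => ?_, ?_⟩
  · apply hroot
    have hmem : l.get (Fin.cast hlen.symm i) ∈ A.charpoly.roots := by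
      rw [← Multiset.mem_toList]; exact l.get_mem _
    exact Polynomial.isRoot_of_mem_roots hmem
  · rw [htr, ← Multiset.sum_toList, ← hl]
    rw [show (∑ i : Fin n, l.get (Fin.cast hlen.symm i)) =
      (List.ofFn (fun i : Fin n => l.get (Fin.cast hlen.symm i))).sum from List.sum_ofFn.symm]
    congr 1
    apply List.ext_get (by simp [hlen])
    intro k h1 h2
    simp



theorem burnside_idem (n : ℕ) (p : Matrix (Fin n) (Fin n) ℂ) (hp : p * p = p)
    (ht : p.trace = n) : p = 1 := by
  set f : (Fin n → ℂ) →ₗ[ℂ] (Fin n → ℂ) := Matrix.toLin' p with hf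
  have hff : ∀ x, f (f x) = f x := by
    intro x
    have : f ∘ₗ f = f := by
      rw [hf, ← Matrix.toLin'_mul, hp]
    exact congrFun (congrArg (fun g => g.toFun) this) x
  have hproj : LinearMap.IsProj (LinearMap.range f) f := by
    constructor
    · intro x; exact ⟨x, rfl⟩
    · rintro x ⟨y, rfl⟩; exact hff y
  have htr : LinearMap.trace ℂ _ f = (Module.finrank ℂ (LinearMap.range f) : ℂ) :=
    hproj.trace
  have htrm : LinearMap.trace ℂ _ f = p.trace := by
    rw [LinearMap.trace_eq_matrix_trace ℂ (Pi.basisFun ℂ (Fin n)) f, hf]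
    congr 1
    rw [LinearMap.toMatrix_eq_toMatrix']
    exact LinearMap.toMatrix'_toLin' p
  have hrank : Module.finrank ℂ (LinearMap.range f) = n := by
    have : (Module.finrank ℂ (LinearMap.range f) : ℂ) = (n : ℂ) := by
      rw [← htr, htrm, ht]
    exact_mod_cast this
  have hrange : LinearMap.range f = ⊤ := by
    apply Submodule.eq_top_of_finrank_eq
    rw [hrank, Module.finrank_pi, Fintype.card_fin]
  have hfid : ∀ x, f x = x := by
    intro x
    have hx : x ∈ LinearMap.range f := hrange ▸ Submodule.mem_top
    exact hproj.map_id x hx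
  apply Matrix.toLin'.injective
  refine LinearMap.ext fun x => ?_
  rw [Matrix.toLin'_one, ← hf, hfid]
  rfl




theorem burnside_unipotent (n s : ℕ) (hs : 1 ≤ s) (v : Matrix (Fin n) (Fin n) ℂ)
    (hv : v ^ s = 1) (htr : ∀ k : ℕ, (v ^ k).trace = n) : v = 1 := by
  set w : Matrix (Fin n) (Fin n) ℂ := ∑ k ∈ Finset.range s, v ^ k with hw
  have hvw : v * w = w := by
    rw [hw, Finset.mul_sum]
    have h1 : ∀ k ∈ Finset.range s, v * v ^ k = v ^ (k + 1) := fun k _ => (pow_succ' v k).symm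
    rw [Finset.sum_congr rfl h1]
    have := Finset.sum_range_succ' (fun k => v ^ k) s
    -- this : ∑_{k<s+1} v^k = ∑_{k<s} v^(k+1) + v^0
    have h2 := Finset.sum_range_succ (fun k => v ^ k) s
    -- h2 : ∑_{k<s+1} v^k = ∑_{k<s} v^k + v^s
    rw [h2] at this
    -- this : ∑_{k<s} v^k + v^s = ∑_{k<s} v^(k+1) + v^0
    rw [hv, pow_zero] at this
    exact (add_right_cancel this).symm
  have hpoww : ∀ k : ℕ, v ^ k * w = w := by
    intro k
    induction k with
    | zero => simp
    | succ k ih => rw [pow_succ', mul_assoc, ih, hvw]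
  have hww : w * w = (s : ℂ) • w := by
    rw [hw, Finset.sum_mul]
    rw [Finset.sum_congr rfl (fun k _ => hpoww k)]
    simp [Finset.sum_const, Nat.cast_smul_eq_nsmul ℂ]; rfl
  have hs0 : (s : ℂ) ≠ 0 := Nat.cast_ne_zero.mpr (by omega)
  set p : Matrix (Fin n) (Fin n) ℂ := (s : ℂ)⁻¹ • w with hpdef
  have hpp : p * p = p := by
    rw [hpdef, Matrix.smul_mul, Matrix.mul_smul, hww, smul_smul, smul_smul]
    congr 1
    field_simp
  have htp : p.trace = n := by
    rw [hpdef, Matrix.trace_smul, hw]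
    rw [Matrix.trace_sum]
    rw [Finset.sum_congr rfl (fun k _ => htr k)]
    simp only [Finset.sum_const, Finset.card_range, nsmul_eq_mul, smul_eq_mul]
    field_simp
  have hp1 : p = 1 := burnside_idem n p hpp htp
  have hvp : v * p = p := by
    rw [hpdef, Matrix.mul_smul, hvw]
  rw [hp1, mul_one] at hvp
  exact hvp


/-- Burnside: a subgroup of `GLₙ(ℂ)` of bounded exponent `s` is finite. -/
theorem stmt6 (n : ℕ) (s : ℕ) (hs : 1 ≤ s)
    (G : Subgroup (Matrix.GeneralLinearGroup (Fin n) ℂ))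
    (hexp : ∀ g ∈ G, g ^ s = 1) :
    Finite G := by
  classical
  set T : Set ℂ := {z : ℂ | ∃ f : Fin n → ℂ, (∀ i, f i ^ s = 1) ∧ ∑ i, f i = z} with hT
  have hTfin : T.Finite := burnside_Tset_finite n s hs
  haveI : Finite ↥T := hTfin
  -- matrices of group elements satisfy A^s = 1
  have hmat : ∀ g ∈ G, ((g : (Matrix (Fin n) (Fin n) ℂ)ˣ) : (Matrix (Fin n) (Fin n) ℂ)) ^ s = 1 := by
    intro g hg
    rw [← Units.val_pow_eq_pow_val, hexp g hg, Units.val_one]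
  have htrmem : ∀ g ∈ G, ((g : (Matrix (Fin n) (Fin n) ℂ)ˣ) : (Matrix (Fin n) (Fin n) ℂ)).trace ∈ T := by
    intro g hg
    exact burnside_trace_mem n s hs _ (hmat g hg)
      (fun μ hμ => burnside_root_pow n s _ (hmat g hg) hμ)
  -- span of the image of G
  set S : Set (Matrix (Fin n) (Fin n) ℂ) := (fun g : (Matrix (Fin n) (Fin n) ℂ)ˣ => (g : (Matrix (Fin n) (Fin n) ℂ))) '' (G : Set (Matrix (Fin n) (Fin n) ℂ)ˣ) with hS
  obtain ⟨b, hbS, hspan, hli⟩ := exists_linearIndependent ℂ S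
  have hbfin : b.Finite := hli.setFinite
  haveI : Finite ↥b := hbfin
  -- the injection
  have key : ∀ g₁ ∈ G, ∀ g₂ ∈ G,
      (∀ x ∈ b, (((g₁ : (Matrix (Fin n) (Fin n) ℂ)ˣ) : (Matrix (Fin n) (Fin n) ℂ)) * x).trace = (((g₂ : (Matrix (Fin n) (Fin n) ℂ)ˣ) : (Matrix (Fin n) (Fin n) ℂ)) * x).trace) → g₁ = g₂ := by
    intro g₁ hg₁ g₂ hg₂ htr
    -- linear functional
    set L : (Matrix (Fin n) (Fin n) ℂ) →ₗ[ℂ] ℂ :=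
      (Matrix.traceLinearMap (Fin n) ℂ ℂ).comp
        (LinearMap.mulLeft ℂ (((g₁ : (Matrix (Fin n) (Fin n) ℂ)ˣ) : (Matrix (Fin n) (Fin n) ℂ)) - ((g₂ : (Matrix (Fin n) (Fin n) ℂ)ˣ) : (Matrix (Fin n) (Fin n) ℂ)))) with hL
    have hLb : ∀ x ∈ b, L x = 0 := by
      intro x hx
      have : L x = (((g₁ : (Matrix (Fin n) (Fin n) ℂ)ˣ) : (Matrix (Fin n) (Fin n) ℂ)) * x).trace - (((g₂ : (Matrix (Fin n) (Fin n) ℂ)ˣ) : (Matrix (Fin n) (Fin n) ℂ)) * x).trace := by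
        simp only [hL, LinearMap.comp_apply, LinearMap.mulLeft_apply,
          Matrix.traceLinearMap_apply, Matrix.sub_mul, Matrix.trace_sub]
      rw [this, htr x hx, sub_self]
    have hLS : ∀ y ∈ S, L y = 0 := by
      intro y hy
      have h1 : Submodule.span ℂ b ≤ LinearMap.ker L := by
        rw [Submodule.span_le]
        intro x hx
        exact hLb x hx
      have h2 : y ∈ Submodule.span ℂ S := Submodule.subset_span hy
      rw [← hspan] at h2
      exact h1 h2
    -- so traces agree on all of G
    have htrG : ∀ u ∈ G, (((g₁ : (Matrix (Fin n) (Fin n) ℂ)ˣ) : (Matrix (Fin n) (Fin n) ℂ)) * ((u : (Matrix (Fin n) (Fin n) ℂ)ˣ) : (Matrix (Fin n) (Fin n) ℂ))).trace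
        = (((g₂ : (Matrix (Fin n) (Fin n) ℂ)ˣ) : (Matrix (Fin n) (Fin n) ℂ)) * ((u : (Matrix (Fin n) (Fin n) ℂ)ˣ) : (Matrix (Fin n) (Fin n) ℂ))).trace := by
      intro u hu
      have := hLS _ ⟨u, hu, rfl⟩
      rw [hL] at this
      simp only [LinearMap.comp_apply, LinearMap.mulLeft_apply,
        Matrix.traceLinearMap_apply, Matrix.sub_mul, Matrix.trace_sub] at this
      exact sub_eq_zero.mp this
    -- consider v = g₁ * g₂⁻¹
    set v : (Matrix (Fin n) (Fin n) ℂ)ˣ := g₁ * g₂⁻¹ with hv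
    have hvG : v ∈ G := G.mul_mem hg₁ (G.inv_mem hg₂)
    have hvtr : ∀ u ∈ G, ((v : (Matrix (Fin n) (Fin n) ℂ)) * ((u : (Matrix (Fin n) (Fin n) ℂ)ˣ) : (Matrix (Fin n) (Fin n) ℂ))).trace = ((u : (Matrix (Fin n) (Fin n) ℂ)ˣ) : (Matrix (Fin n) (Fin n) ℂ)).trace := by
      intro u hu
      have h := htrG (g₂⁻¹ * u) (G.mul_mem (G.inv_mem hg₂) hu)
      have e1 : ((g₁ : (Matrix (Fin n) (Fin n) ℂ)ˣ) : (Matrix (Fin n) (Fin n) ℂ)) * (((g₂⁻¹ * u : (Matrix (Fin n) (Fin n) ℂ)ˣ)) : (Matrix (Fin n) (Fin n) ℂ)) = (v : (Matrix (Fin n) (Fin n) ℂ)) * ((u : (Matrix (Fin n) (Fin n) ℂ)ˣ) : (Matrix (Fin n) (Fin n) ℂ)) := by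
        rw [Units.val_mul, hv, Units.val_mul, mul_assoc]
      have e2 : ((g₂ : (Matrix (Fin n) (Fin n) ℂ)ˣ) : (Matrix (Fin n) (Fin n) ℂ)) * (((g₂⁻¹ * u : (Matrix (Fin n) (Fin n) ℂ)ˣ)) : (Matrix (Fin n) (Fin n) ℂ)) = ((u : (Matrix (Fin n) (Fin n) ℂ)ˣ) : (Matrix (Fin n) (Fin n) ℂ)) := by
        rw [Units.val_mul, ← mul_assoc, ← Units.val_mul, mul_inv_cancel, Units.val_one, one_mul]
      rw [e1, e2] at h
      exact h
    have hvpowtr : ∀ k : ℕ, ((v : (Matrix (Fin n) (Fin n) ℂ)) ^ k).trace = n := by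
      intro k
      induction k with
      | zero => simp [Matrix.trace_one]
      | succ k ih =>
        have : (v : (Matrix (Fin n) (Fin n) ℂ)) ^ (k + 1) = (v : (Matrix (Fin n) (Fin n) ℂ)) * ((v ^ k : (Matrix (Fin n) (Fin n) ℂ)ˣ) : (Matrix (Fin n) (Fin n) ℂ)) := by
          rw [Units.val_pow_eq_pow_val, pow_succ']
        rw [this, hvtr (v ^ k) (G.pow_mem hvG k), ← Units.val_pow_eq_pow_val] at *
        rw [ih]
    have hv1 : (v : (Matrix (Fin n) (Fin n) ℂ)) = 1 := burnside_unipotent n s hs _ (hmat v hvG) hvpowtr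
    have : v = 1 := Units.ext hv1
    rw [hv] at this
    have := mul_inv_eq_one.mp this  -- g₁ * g₂⁻¹ = 1 → g₁ = g₂
    exact this
  -- build injection into finite type
  set Φ : ↥G → (↥b → ↥T) := fun g x =>
    ⟨((((g : (Matrix (Fin n) (Fin n) ℂ)ˣ)) : (Matrix (Fin n) (Fin n) ℂ)) * (x : (Matrix (Fin n) (Fin n) ℂ))).trace, by
      obtain ⟨u, hu, hux⟩ := hbS x.2
      have : (((g : (Matrix (Fin n) (Fin n) ℂ)ˣ) : (Matrix (Fin n) (Fin n) ℂ)) * (x : (Matrix (Fin n) (Fin n) ℂ))) = (((g * u : (Matrix (Fin n) (Fin n) ℂ)ˣ)) : (Matrix (Fin n) (Fin n) ℂ)) := by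
        rw [Units.val_mul]; exact congrArg _ hux.symm
      rw [this]
      exact htrmem _ (G.mul_mem g.2 hu)⟩ with hΦ
  have hinj : Function.Injective Φ := by
    intro g₁ g₂ h
    have : ∀ x ∈ b, (((g₁ : (Matrix (Fin n) (Fin n) ℂ)ˣ) : (Matrix (Fin n) (Fin n) ℂ)) * x).trace = (((g₂ : (Matrix (Fin n) (Fin n) ℂ)ˣ) : (Matrix (Fin n) (Fin n) ℂ)) * x).trace := by
      intro x hx
      have := congrFun h ⟨x, hx⟩
      exact Subtype.ext_iff.mp this
    exact Subtype.ext (key g₁ g₁.2 g₂ g₂.2 this)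
  exact Finite.of_injective Φ hinj
end
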